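/- Let 0 < γ < β ≤ 1, θ > 0, A > 0, δ = γ/β, and Φ(t,s) = exp( -θA(1-s)^{γ-β}(B(t,s)^{1-δ}-1)/(1-δ) ) with B(t,s) = 1 + t(1-s)^β/A. With normalization z = z(t) = (A/t)^{1/β}, for every λ > 0, lim_{t→∞} Φ(t, e^{-λz}) = 0. -/

import Mathlib

open Real Filter Topology

theorem degenerate_limit_strong_normalization
    (β γ θ A δ : ℝ) (hγ : 0 < γ) (hγβ : γ < β) (hβ1 : β ≤ 1)
    (hθ : 0 < θ) (hA : 0 < A) (hδ : δ = γ / β)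
    (B Φ : ℝ → ℝ → ℝ)
    (hB : ∀ t s, B t s = 1 + t * (1 - s) ^ β / A)
    (hΦ : ∀ t s, Φ t s = Real.exp (-(θ * A) * (1 - s) ^ (γ - β) * ((B t s ^ (1 - δ) - 1) / (1 - δ)))) :
    ∀ lam : ℝ, 0 < lam →
      Tendsto (fun t : ℝ => Φ t (Real.exp (-lam * (A / t) ^ (1 / β))))
        atTop (nhds 0) := by
  intro lam hlam
  have hβ : 0 < β := hγ.trans hγβ
  set z : ℝ → ℝ := fun t => (A / t) ^ (1 / β) with hzdef
  set s : ℝ → ℝ := fun t => Real.exp (-lam * z t) with hsdef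
  set w : ℝ → ℝ := fun t => (1 - s t) / z t with hwdef
  -- basic facts
  have hδ0 : 0 < δ := hδ ▸ div_pos hγ hβ
  have hδ1 : δ < 1 := hδ ▸ (div_lt_one hβ).mpr hγβ
  have h1δ : 0 < 1 - δ := by linarith
  -- z → 0
  have hz0 : Tendsto z atTop (𝓝 0) := by
    have h1 : Tendsto (fun t : ℝ => A / t) atTop (𝓝 0) :=
      Tendsto.div_atTop tendsto_const_nhds tendsto_id
    have h2 : ContinuousAt (fun x : ℝ => x ^ (1 / β)) 0 :=
      Real.continuousAt_rpow_const 0 (1 / β) (Or.inr (by positivity))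
    have := h2.tendsto.comp h1
    rw [show ((0:ℝ) ^ ((1:ℝ)/β)) = 0 from Real.zero_rpow (by positivity)] at this
    exact this
  have hzpos : ∀ᶠ t in atTop, 0 < z t := by
    filter_upwards [eventually_gt_atTop (0:ℝ)] with t ht
    exact Real.rpow_pos_of_pos (div_pos hA ht) _
  have hspos : ∀ᶠ t in atTop, 0 < 1 - s t := by
    filter_upwards [hzpos] with t ht
    have : s t < 1 := by
      show Real.exp (-lam * z t) < 1
      exact Real.exp_lt_one_iff.mpr (by nlinarith)
    linarith
  -- w → lam
  have hw : Tendsto w atTop (𝓝 lam) := by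
    have hd : HasDerivAt (fun x : ℝ => 1 - Real.exp (-lam * x)) lam 0 := by
      have h1 : HasDerivAt (fun x : ℝ => -lam * x) (-lam) 0 := by
        simpa using (hasDerivAt_id (0:ℝ)).const_mul (-lam)
      have h2 := h1.exp
      have h3 := (hasDerivAt_const (0:ℝ) (1:ℝ)).sub h2
      have h4 : HasDerivAt (fun x : ℝ => 1 - Real.exp (-lam * x)) _ 0 := h3
      simpa using h4
    have hslope := hasDerivAt_iff_tendsto_slope.mp hd
    have hzne : Tendsto z atTop (𝓝[≠] 0) := by
      rw [tendsto_nhdsWithin_iff]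
      refine ⟨hz0, ?_⟩
      filter_upwards [hzpos] with t ht
      exact ht.ne'
    have := hslope.comp hzne
    refine this.congr' ?_
    filter_upwards [hzpos] with t ht
    simp [slope_def_field, hwdef, hsdef, Function.comp]
  -- eventual identity: B t (s t) = 1 + w t ^ β
  have hBkey : ∀ᶠ t in atTop, B t (s t) = 1 + w t ^ β := by
    filter_upwards [eventually_gt_atTop (0:ℝ), hzpos, hspos] with t ht hzt hst
    have hz1 : (1 - s t) = z t * w t := by
      show _ = z t * ((1 - s t) / z t)
      rw [mul_div_assoc', eq_div_iff hzt.ne', mul_comm]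
    have hzb : z t ^ β = A / t := by
      rw [hzdef]
      rw [← Real.rpow_mul (le_of_lt (div_pos hA ht)), one_div_mul_cancel hβ.ne',
        Real.rpow_one]
    have hwnn : 0 ≤ w t := div_nonneg hst.le hzt.le
    rw [hB, hz1, Real.mul_rpow hzt.le hwnn, hzb]
    field_simp
  -- the second factor tends to a positive constant
  have hc0 : (0:ℝ) < 1 + lam ^ β := by positivity
  have hrp : (1:ℝ) < (1 + lam ^ β) ^ (1 - δ) := by
    rw [one_lt_rpow_iff_of_pos hc0]
    left
    constructor
    · have : (0:ℝ) < lam ^ β := Real.rpow_pos_of_pos hlam β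
      linarith
    · exact h1δ
  set c : ℝ := ((1 + lam ^ β) ^ (1 - δ) - 1) / (1 - δ) with hcdef
  have hcpos : 0 < c := div_pos (by linarith) h1δ
  have hterm2 : Tendsto (fun t => ((1 + w t ^ β) ^ (1 - δ) - 1) / (1 - δ)) atTop (𝓝 c) := by
    have h1 : Tendsto (fun t => w t ^ β) atTop (𝓝 (lam ^ β)) :=
      ((Real.continuousAt_rpow_const lam β (Or.inl hlam.ne')).tendsto).comp hw
    have h2 : Tendsto (fun t => 1 + w t ^ β) atTop (𝓝 (1 + lam ^ β)) :=
      tendsto_const_nhds.add h1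
    have h3 : Tendsto (fun t => (1 + w t ^ β) ^ (1 - δ)) atTop
        (𝓝 ((1 + lam ^ β) ^ (1 - δ))) :=
      ((Real.continuousAt_rpow_const _ (1 - δ) (Or.inl hc0.ne')).tendsto).comp h2
    exact (h3.sub tendsto_const_nhds).div_const _
  -- the first factor tends to ∞
  have hterm1 : Tendsto (fun t => (1 - s t) ^ (γ - β)) atTop atTop := by
    have hbase : Tendsto (fun t => 1 - s t) atTop (𝓝 0) := by
      have : Tendsto (fun t => Real.exp (-lam * z t)) atTop (𝓝 1) := by
        have hm : Tendsto (fun t => -lam * z t) atTop (𝓝 0) := by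
          simpa using ((tendsto_const_nhds : Tendsto (fun _ : ℝ => -lam) atTop (𝓝 (-lam)))).mul hz0
        have := (Real.continuous_exp.tendsto 0).comp hm
        simpa [Function.comp_def] using this
      simpa using (tendsto_const_nhds.sub this : Tendsto (fun t => 1 - s t) atTop (𝓝 (1 - 1)))
    have hpow : Tendsto (fun t => (1 - s t) ^ (β - γ)) atTop (𝓝[>] 0) := by
      rw [tendsto_nhdsWithin_iff]
      constructor
      · have h2 : ContinuousAt (fun x : ℝ => x ^ (β - γ)) 0 :=
          Real.continuousAt_rpow_const 0 (β - γ) (Or.inr (by linarith))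
        have := h2.tendsto.comp hbase
        simpa [Function.comp_def, Real.zero_rpow (by linarith : β - γ ≠ 0)] using this
      · filter_upwards [hspos] with t ht
        exact Real.rpow_pos_of_pos ht _
    have := hpow.inv_tendsto_nhdsGT_zero
    refine this.congr' ?_
    filter_upwards [hspos] with t ht
    rw [Pi.inv_apply, ← Real.rpow_neg ht.le]
    ring_nf
  -- exponent → -∞
  have hexp : Tendsto (fun t => θ * A * ((1 - s t) ^ (γ - β) *
      (((1 + w t ^ β) ^ (1 - δ) - 1) / (1 - δ)))) atTop atTop :=
    Tendsto.const_mul_atTop (by positivity) (hterm1.atTop_mul_pos hcpos hterm2)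
  have hneg : Tendsto (fun t => -(θ * A * ((1 - s t) ^ (γ - β) *
      (((1 + w t ^ β) ^ (1 - δ) - 1) / (1 - δ))))) atTop atBot :=
    tendsto_neg_atTop_atBot.comp hexp
  have hfinal := Real.tendsto_exp_atBot.comp hneg
  refine hfinal.congr' ?_
  filter_upwards [hBkey] with t hBt
  simp only [Function.comp_apply]
  rw [show Real.exp (-lam * (A / t) ^ (1 / β)) = s t from rfl, hΦ, hBt]
  congr 1
  ring
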